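/- For λ ∈ ℂ \ {-1,0,1} with all relevant points distinct, and p_λ(z) = (z²-1)(z²-λ⁴), the points (λ, -λ, iλ, -iλ) and (λ, -λ, 0, ∞) are mapped by the Jacobi Ehrlich–Aberth map for p_λ to (-λ, λ, -iλ, iλ) and (-λ, λ, ∞, 0) respectively; hence both are periodic points of period 2. -/

import Mathlib

/-- The contribution `1/(z - w)` of a companion point `w ∈ ℙ¹(ℂ)` to the
electrostatic sum of the Ehrlich–Aberth step; the term for `w = ∞` vanishes. -/
noncomputable def eaTerm (z : ℂ) : Option ℂ → ℂ
  | none => 0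
  | some w => 1 / (z - w)

/-- The Ehrlich–Aberth update step for a monic degree-4 polynomial with (finite)
roots `α`, extended Möbius-equivariantly to `ℙ¹(ℂ)` (modeled as `Option ℂ`,
`none` = ∞): for finite `z` it is characterized by the field interpretation, and
`EA(∞; w₁,w₂,w₃) = ∑_j α j - ∑_i w i`. -/
noncomputable def eaStepP1 (α : Fin 4 → ℂ) (z : Option ℂ) (w : Fin 3 → Option ℂ) :
    Option ℂ :=
  match z with
  | none => some ((∑ j, α j) - ∑ i, (w i).getD 0)
  | some z =>
      let s : ℂ := (∑ j, 1 / (z - α j)) - ∑ i, eaTerm z (w i)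
      if s = 0 then none else some (z - 1 / s)

lemma eaStep_some (α : Fin 4 → ℂ) (z : ℂ) (w : Fin 3 → Option ℂ) (t : ℂ)
    (h : (∑ j, 1 / (z - α j)) - ∑ i, eaTerm z (w i) = 1 / (z - t)) (hzt : z ≠ t) :
    eaStepP1 α (some z) w = some t := by
  unfold eaStepP1
  simp only [h]
  rw [if_neg (one_div_ne_zero (sub_ne_zero.mpr hzt)), one_div_one_div]
  congr 1
  ring

lemma eaStep_inf (α : Fin 4 → ℂ) (z : ℂ) (w : Fin 3 → Option ℂ)
    (h : (∑ j, 1 / (z - α j)) - ∑ i, eaTerm z (w i) = 0) :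
    eaStepP1 α (some z) w = none := by
  unfold eaStepP1
  simp only [h]
  rfl

set_option maxHeartbeats 2000000 in
/-- For `p_l(z) = (z²-1)(z²-l⁴)` (roots `1, -1, l², -l²`), the points
`(l, -l, il, -il)` and `(l, -l, 0, ∞)` are mapped by the Jacobi Ehrlich–Aberth
map to `(-l, l, -il, il)` and `(-l, l, ∞, 0)` respectively; hence both are
periodic points of period 2. -/
theorem stmt12 (l : ℂ) (h0 : l ≠ 0) (h1 : l ≠ 1) (hm1 : l ≠ -1) (h4 : l ^ 4 ≠ 1) :
    (eaStepP1 ![1, -1, l ^ 2, -l ^ 2] (some l)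
        ![some (-l), some (Complex.I * l), some (-(Complex.I * l))] = some (-l) ∧
      eaStepP1 ![1, -1, l ^ 2, -l ^ 2] (some (-l))
        ![some l, some (Complex.I * l), some (-(Complex.I * l))] = some l ∧
      eaStepP1 ![1, -1, l ^ 2, -l ^ 2] (some (Complex.I * l))
        ![some l, some (-l), some (-(Complex.I * l))] = some (-(Complex.I * l)) ∧
      eaStepP1 ![1, -1, l ^ 2, -l ^ 2] (some (-(Complex.I * l)))
        ![some l, some (-l), some (Complex.I * l)] = some (Complex.I * l)) ∧
    (eaStepP1 ![1, -1, l ^ 2, -l ^ 2] (some l)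
        ![some (-l), some 0, none] = some (-l) ∧
      eaStepP1 ![1, -1, l ^ 2, -l ^ 2] (some (-l))
        ![some l, some 0, none] = some l ∧
      eaStepP1 ![1, -1, l ^ 2, -l ^ 2] (some 0)
        ![some l, some (-l), none] = none ∧
      eaStepP1 ![1, -1, l ^ 2, -l ^ 2] none
        ![some l, some (-l), some 0] = some 0) := by
  have hI2 : Complex.I ^ 2 = -1 := Complex.I_sq
  have hA : l - 1 ≠ 0 := sub_ne_zero.mpr h1
  have hB : l + 1 ≠ 0 := fun h => hm1 (by linear_combination h)
  have hC : l - l ^ 2 ≠ 0 := by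
    have : l - l ^ 2 = l * (1 - l) := by ring
    rw [this]; exact mul_ne_zero h0 (fun h => h1 (by linear_combination -h))
  have hD : l + l ^ 2 ≠ 0 := by
    have : l + l ^ 2 = l * (1 + l) := by ring
    rw [this]; exact mul_ne_zero h0 (fun h => hm1 (by linear_combination h))
  have hE : (2 : ℂ) * l ≠ 0 := mul_ne_zero two_ne_zero h0
  have hEE : l + l ≠ 0 := by intro h; exact h0 (by linear_combination h / 2)
  have hIne1 : Complex.I ≠ 1 := by
    intro h; simpa using congrArg Complex.im h
  have hIm1 : Complex.I - 1 ≠ 0 := sub_ne_zero.mpr hIne1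
  have hIp1 : Complex.I + 1 ≠ 0 := by
    intro h
    have : (2 : ℂ) = 0 := by linear_combination -(Complex.I - 1) * h + hI2
    exact two_ne_zero this
  have hiA : Complex.I * l - 1 ≠ 0 := by
    intro h; apply h4
    linear_combination (Complex.I * l + 1) * (1 - l ^ 2) * h + (l ^ 4 - l ^ 2) * hI2
  have hiB : Complex.I * l + 1 ≠ 0 := by
    intro h; apply h4
    linear_combination (Complex.I * l - 1) * (1 - l ^ 2) * h + (l ^ 4 - l ^ 2) * hI2
  have hli : l - Complex.I ≠ 0 := by
    intro h; apply h4
    linear_combination (l + Complex.I) * (l ^ 2 - 1) * h + (l ^ 2 - 1) * hI2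
  have hlmi : l + Complex.I ≠ 0 := by
    intro h; apply h4
    linear_combination (l - Complex.I) * (l ^ 2 - 1) * h + (l ^ 2 - 1) * hI2
  have hIl : Complex.I * l ≠ 0 := mul_ne_zero Complex.I_ne_zero h0
  have hll : l ≠ -l := fun h => h0 (by linear_combination h / 2)
  have hll' : -l ≠ l := fun h => h0 (by linear_combination -h / 2)
  have hii : Complex.I * l ≠ -(Complex.I * l) := fun h => hIl (by linear_combination h / 2)
  have hii' : -(Complex.I * l) ≠ Complex.I * l := fun h => hIl (by linear_combination -h / 2)
  have hq : l ^ 2 + 1 ≠ 0 := by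
    intro h; apply h4; linear_combination (l ^ 2 - 1) * h
  have hq2 : l ^ 2 * (l ^ 2 + 1) ≠ 0 := mul_ne_zero (pow_ne_zero 2 h0) hq
  have hn1 : l - Complex.I * l ≠ 0 := by
    have : l - Complex.I * l = -l * (Complex.I - 1) := by ring
    rw [this]; exact mul_ne_zero (neg_ne_zero.mpr h0) hIm1
  have hn2 : l + Complex.I * l ≠ 0 := by
    have : l + Complex.I * l = l * (Complex.I + 1) := by ring
    rw [this]; exact mul_ne_zero h0 hIp1
  have hm1a : -l - 1 ≠ 0 := by
    have : -l - 1 = -(l + 1) := by ring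
    rw [this]; exact neg_ne_zero.mpr hB
  have hm1b : -l + 1 ≠ 0 := by
    have : -l + 1 = -(l - 1) := by ring
    rw [this]; exact neg_ne_zero.mpr hA
  have hm2a : -l - l ^ 2 ≠ 0 := by
    have : -l - l ^ 2 = -(l + l ^ 2) := by ring
    rw [this]; exact neg_ne_zero.mpr hD
  have hm2b : -l + l ^ 2 ≠ 0 := by
    have : -l + l ^ 2 = -(l - l ^ 2) := by ring
    rw [this]; exact neg_ne_zero.mpr hC
  have hmE : -l - l ≠ 0 := by
    have : -l - l = -(l + l) := by ring
    rw [this]; exact neg_ne_zero.mpr hEE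
  have hd2a : -l - Complex.I * l ≠ 0 := by
    have : -l - Complex.I * l = -(l + Complex.I * l) := by ring
    rw [this]; exact neg_ne_zero.mpr hn2
  have hd2b : -l + Complex.I * l ≠ 0 := by
    have : -l + Complex.I * l = -(l - Complex.I * l) := by ring
    rw [this]; exact neg_ne_zero.mpr hn1
  have hd3a : Complex.I * l - l ^ 2 ≠ 0 := by
    have : Complex.I * l - l ^ 2 = -l * (l - Complex.I) := by ring
    rw [this]; exact mul_ne_zero (neg_ne_zero.mpr h0) hli
  have hd3b : Complex.I * l + l ^ 2 ≠ 0 := by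
    have : Complex.I * l + l ^ 2 = l * (l + Complex.I) := by ring
    rw [this]; exact mul_ne_zero h0 hlmi
  have hd3c : Complex.I * l - l ≠ 0 := by
    have : Complex.I * l - l = l * (Complex.I - 1) := by ring
    rw [this]; exact mul_ne_zero h0 hIm1
  have hd3d : Complex.I * l + l ≠ 0 := by
    have : Complex.I * l + l = l * (Complex.I + 1) := by ring
    rw [this]; exact mul_ne_zero h0 hIp1
  have hd3e : Complex.I * l + Complex.I * l ≠ 0 := by
    have : Complex.I * l + Complex.I * l = 2 * (Complex.I * l) := by ring
    rw [this]; exact mul_ne_zero two_ne_zero hIl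
  have hd4a : -(Complex.I * l) - 1 ≠ 0 := by
    have : -(Complex.I * l) - 1 = -(Complex.I * l + 1) := by ring
    rw [this]; exact neg_ne_zero.mpr hiB
  have hd4b : -(Complex.I * l) + 1 ≠ 0 := by
    have : -(Complex.I * l) + 1 = -(Complex.I * l - 1) := by ring
    rw [this]; exact neg_ne_zero.mpr hiA
  have hd4c : -(Complex.I * l) - l ^ 2 ≠ 0 := by
    have : -(Complex.I * l) - l ^ 2 = -(Complex.I * l + l ^ 2) := by ring
    rw [this]; exact neg_ne_zero.mpr hd3b
  have hd4d : -(Complex.I * l) + l ^ 2 ≠ 0 := by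
    have : -(Complex.I * l) + l ^ 2 = -(Complex.I * l - l ^ 2) := by ring
    rw [this]; exact neg_ne_zero.mpr hd3a
  have hd4e : -(Complex.I * l) - l ≠ 0 := by
    have : -(Complex.I * l) - l = -(Complex.I * l + l) := by ring
    rw [this]; exact neg_ne_zero.mpr hd3d
  have hd4f : -(Complex.I * l) + l ≠ 0 := by
    have : -(Complex.I * l) + l = -(Complex.I * l - l) := by ring
    rw [this]; exact neg_ne_zero.mpr hd3c
  have hd4g : -(Complex.I * l) - Complex.I * l ≠ 0 := by
    have : -(Complex.I * l) - Complex.I * l = -(Complex.I * l + Complex.I * l) := by ring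
    rw [this]; exact neg_ne_zero.mpr hd3e
  refine ⟨⟨?_, ?_, ?_, ?_⟩, ⟨?_, ?_, ?_, ?_⟩⟩
  · -- z = l ↦ -l (period-2 cycle 1)
    apply eaStep_some _ _ _ _ ?_ hll
    simp only [Fin.sum_univ_four, Fin.sum_univ_three, Matrix.cons_val_zero,
      Matrix.cons_val_one, Matrix.head_cons, Matrix.cons_val_two, Matrix.tail_cons,
      Matrix.cons_val_three, eaTerm, sub_neg_eq_add]
    rw [show (1 : ℂ) / (l - Complex.I * l) = (1 + Complex.I) / (2 * l) from by
        rw [div_eq_div_iff hn1 hE]; linear_combination l * hI2,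
      show (1 : ℂ) / (l + Complex.I * l) = (1 - Complex.I) / (2 * l) from by
        rw [div_eq_div_iff hn2 hE]; linear_combination l * hI2]
    field_simp
    try rw [div_eq_one_iff_eq (by simp [mul_eq_zero, h0, hA, hB, hC, hD, hEE, hE, hq, hq2, hm1a, hm1b, hm2a, hm2b, hmE])]
    try field_simp [h0, show (1:ℂ) + l ≠ 0 by rwa [add_comm], show (-1:ℂ) + l ≠ 0 by rwa [add_comm, ← sub_eq_add_neg]]
    try ring
  · -- z = -l ↦ l
    apply eaStep_some _ _ _ _ ?_ hll'
    simp only [Fin.sum_univ_four, Fin.sum_univ_three, Matrix.cons_val_zero,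
      Matrix.cons_val_one, Matrix.head_cons, Matrix.cons_val_two, Matrix.tail_cons,
      Matrix.cons_val_three, eaTerm, sub_neg_eq_add]
    rw [show (1 : ℂ) / (-l - Complex.I * l) = (Complex.I - 1) / (2 * l) from by
        rw [div_eq_div_iff hd2a hE]; linear_combination l * hI2,
      show (1 : ℂ) / (-l + Complex.I * l) = -(Complex.I + 1) / (2 * l) from by
        rw [div_eq_div_iff hd2b hE]; linear_combination l * hI2]
    field_simp
    try rw [div_eq_one_iff_eq (by simp [mul_eq_zero, h0, hA, hB, hC, hD, hEE, hE, hq, hq2, hm1a, hm1b, hm2a, hm2b, hmE])]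
    try field_simp [h0, show (1:ℂ) + l ≠ 0 by rwa [add_comm], show (-1:ℂ) + l ≠ 0 by rwa [add_comm, ← sub_eq_add_neg]]
    try ring
  · -- z = I*l ↦ -(I*l)
    apply eaStep_some _ _ _ _ ?_ hii
    simp only [Fin.sum_univ_four, Fin.sum_univ_three, Matrix.cons_val_zero,
      Matrix.cons_val_one, Matrix.head_cons, Matrix.cons_val_two, Matrix.tail_cons,
      Matrix.cons_val_three, eaTerm, sub_neg_eq_add]
    rw [show (1 : ℂ) / (Complex.I * l - 1) = (-(Complex.I * l) - 1) / (l ^ 2 + 1) from by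
        rw [div_eq_div_iff hiA hq]; linear_combination l ^ 2 * hI2,
      show (1 : ℂ) / (Complex.I * l + 1) = (1 - Complex.I * l) / (l ^ 2 + 1) from by
        rw [div_eq_div_iff hiB hq]; linear_combination l ^ 2 * hI2,
      show (1 : ℂ) / (Complex.I * l - l ^ 2) = (-(Complex.I * l) - l ^ 2) / (l ^ 2 * (l ^ 2 + 1)) from by
        rw [div_eq_div_iff hd3a hq2]; linear_combination l ^ 2 * hI2,
      show (1 : ℂ) / (Complex.I * l + l ^ 2) = (l ^ 2 - Complex.I * l) / (l ^ 2 * (l ^ 2 + 1)) from by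
        rw [div_eq_div_iff hd3b hq2]; linear_combination l ^ 2 * hI2,
      show (1 : ℂ) / (Complex.I * l - l) = (-Complex.I - 1) / (2 * l) from by
        rw [div_eq_div_iff hd3c hE]; linear_combination l * hI2,
      show (1 : ℂ) / (Complex.I * l + l) = (1 - Complex.I) / (2 * l) from by
        rw [div_eq_div_iff hd3d hE]; linear_combination l * hI2,
      show (1 : ℂ) / (Complex.I * l + Complex.I * l) = -Complex.I / (2 * l) from by
        rw [div_eq_div_iff hd3e hE]; linear_combination 2 * l * hI2]
    field_simp
    try rw [div_eq_one_iff_eq (by simp [mul_eq_zero, h0, hA, hB, hC, hD, hEE, hE, hq, hq2, hm1a, hm1b, hm2a, hm2b, hmE])]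
    try field_simp [h0]
    try ring
  · -- z = -(I*l) ↦ I*l
    apply eaStep_some _ _ _ _ ?_ hii'
    simp only [Fin.sum_univ_four, Fin.sum_univ_three, Matrix.cons_val_zero,
      Matrix.cons_val_one, Matrix.head_cons, Matrix.cons_val_two, Matrix.tail_cons,
      Matrix.cons_val_three, eaTerm, sub_neg_eq_add]
    rw [show (1 : ℂ) / (-(Complex.I * l) - 1) = (Complex.I * l - 1) / (l ^ 2 + 1) from by
        rw [div_eq_div_iff hd4a hq]; linear_combination l ^ 2 * hI2,
      show (1 : ℂ) / (-(Complex.I * l) + 1) = (1 + Complex.I * l) / (l ^ 2 + 1) from by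
        rw [div_eq_div_iff hd4b hq]; linear_combination l ^ 2 * hI2,
      show (1 : ℂ) / (-(Complex.I * l) - l ^ 2) = (Complex.I * l - l ^ 2) / (l ^ 2 * (l ^ 2 + 1)) from by
        rw [div_eq_div_iff hd4c hq2]; linear_combination l ^ 2 * hI2,
      show (1 : ℂ) / (-(Complex.I * l) + l ^ 2) = (l ^ 2 + Complex.I * l) / (l ^ 2 * (l ^ 2 + 1)) from by
        rw [div_eq_div_iff hd4d hq2]; linear_combination l ^ 2 * hI2,
      show (1 : ℂ) / (-(Complex.I * l) - l) = (Complex.I - 1) / (2 * l) from by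
        rw [div_eq_div_iff hd4e hE]; linear_combination l * hI2,
      show (1 : ℂ) / (-(Complex.I * l) + l) = (Complex.I + 1) / (2 * l) from by
        rw [div_eq_div_iff hd4f hE]; linear_combination l * hI2,
      show (1 : ℂ) / (-(Complex.I * l) - Complex.I * l) = Complex.I / (2 * l) from by
        rw [div_eq_div_iff hd4g hE]; linear_combination 2 * l * hI2]
    field_simp
    try rw [div_eq_one_iff_eq (by simp [mul_eq_zero, h0, hA, hB, hC, hD, hEE, hE, hq, hq2, hm1a, hm1b, hm2a, hm2b, hmE])]
    try field_simp [h0]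
    try ring
  · -- z = l ↦ -l (cycle with 0, ∞)
    apply eaStep_some _ _ _ _ ?_ hll
    simp only [Fin.sum_univ_four, Fin.sum_univ_three, Matrix.cons_val_zero,
      Matrix.cons_val_one, Matrix.head_cons, Matrix.cons_val_two, Matrix.tail_cons,
      Matrix.cons_val_three, eaTerm, sub_neg_eq_add, sub_zero]
    field_simp
    try rw [div_eq_one_iff_eq (by simp [mul_eq_zero, h0, hA, hB, hC, hD, hEE, hE, hq, hq2, hm1a, hm1b, hm2a, hm2b, hmE])]
    try field_simp [h0, show (1:ℂ) + l ≠ 0 by rwa [add_comm], show (-1:ℂ) + l ≠ 0 by rwa [add_comm, ← sub_eq_add_neg]]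
    try ring
  · -- z = -l ↦ l
    apply eaStep_some _ _ _ _ ?_ hll'
    simp only [Fin.sum_univ_four, Fin.sum_univ_three, Matrix.cons_val_zero,
      Matrix.cons_val_one, Matrix.head_cons, Matrix.cons_val_two, Matrix.tail_cons,
      Matrix.cons_val_three, eaTerm, sub_neg_eq_add, sub_zero]
    field_simp
    try rw [div_eq_one_iff_eq (by simp [mul_eq_zero, h0, hA, hB, hC, hD, hEE, hE, hq, hq2, hm1a, hm1b, hm2a, hm2b, hmE])]
    try field_simp [h0, show (1:ℂ) + l ≠ 0 by rwa [add_comm], show (-1:ℂ) + l ≠ 0 by rwa [add_comm, ← sub_eq_add_neg]]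
    try ring
  · -- z = 0 ↦ ∞
    apply eaStep_inf
    simp only [Fin.sum_univ_four, Fin.sum_univ_three, Matrix.cons_val_zero,
      Matrix.cons_val_one, Matrix.head_cons, Matrix.cons_val_two, Matrix.tail_cons,
      Matrix.cons_val_three, eaTerm, sub_neg_eq_add, zero_sub, zero_add]
    field_simp
    ring
  · -- z = ∞ ↦ 0
    show some _ = some 0
    simp only [eaStepP1, Fin.sum_univ_four, Fin.sum_univ_three, Matrix.cons_val_zero,
      Matrix.cons_val_one, Matrix.head_cons, Matrix.cons_val_two, Matrix.tail_cons,
      Matrix.cons_val_three, Option.getD_some, Option.some.injEq]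
    ring
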